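/- There exist real numbers a > b > 1 such that the mapping T : [0,1] → [0,1] defined by T(x) = x/a for x ∈ [0,1/2] and T(x) = x/b for x ∈ (1/2,1] is a discontinuous generalized Kannan type mapping (discontinuous at x = 1/2, and satisfying the generalized Kannan inequality for some λ ∈ [0, 2/3)). -/
import Mathlib

theorem stmt_14 :
    ∃ a b : ℝ, b < a ∧ 1 < b ∧
      ¬ ContinuousWithinAt (fun x : ℝ => if x ≤ 1/2 then x/a else x/b)
          (Set.Icc (0:ℝ) 1) (1/2) ∧
      ∃ l : ℝ, 0 ≤ l ∧ l < 2/3 ∧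
        ∀ x ∈ Set.Icc (0:ℝ) 1, ∀ y ∈ Set.Icc (0:ℝ) 1, ∀ z ∈ Set.Icc (0:ℝ) 1,
          x ≠ y → y ≠ z → x ≠ z →
          (let T : ℝ → ℝ := fun t => if t ≤ 1/2 then t/a else t/b
           |T x - T y| + |T y - T z| + |T x - T z| ≤
             l * (|x - T x| + |y - T y| + |z - T z|)) := by
  refine ⟨6, 5, by norm_num, by norm_num, ?_, 1/2, by norm_num, by norm_num, ?_⟩
  · intro h
    have hsub : Set.Ioc (1/2 : ℝ) 1 ⊆ Set.Icc (0:ℝ) 1 := by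
      intro t ht; exact ⟨by linarith [ht.1], ht.2⟩
    have h' : ContinuousWithinAt (fun x : ℝ => if x ≤ 1/2 then x/6 else x/5)
        (Set.Ioc (1/2 : ℝ) 1) (1/2) := h.mono hsub
    have hne : (nhdsWithin (1/2 : ℝ) (Set.Ioc (1/2 : ℝ) 1)).NeBot :=
      left_nhdsWithin_Ioc_neBot (by norm_num)
    have heq : (fun x : ℝ => if x ≤ 1/2 then x/6 else x/5)
        =ᶠ[nhdsWithin (1/2 : ℝ) (Set.Ioc (1/2 : ℝ) 1)] (fun x => x/5) := by
      filter_upwards [self_mem_nhdsWithin] with t ht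
      simp [not_le.2 ht.1, le_of_lt]
      intro h; linarith [ht.1]
    have h2 := Filter.Tendsto.congr' heq h'
    norm_num at h2
    have h3 : Filter.Tendsto (fun x : ℝ => x/5)
        (nhdsWithin (1/2 : ℝ) (Set.Ioc (1/2 : ℝ) 1)) (nhds ((1:ℝ)/2/5)) :=
      ((continuous_id.div_const 5).tendsto _).mono_left nhdsWithin_le_nhds
    norm_num at h3
    have := tendsto_nhds_unique h2 h3
    norm_num at this
  · intro x hx y hy z hz _ _ _
    intro T
    have key : ∀ t ∈ Set.Icc (0:ℝ) 1, 0 ≤ T t ∧ T t ≤ t/5 := by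
      intro t ht
      simp only [T]
      split <;> constructor <;> linarith [ht.1]
    obtain ⟨hx0, hx5⟩ := key x hx
    obtain ⟨hy0, hy5⟩ := key y hy
    obtain ⟨hz0, hz5⟩ := key z hz
    have hxx : x - T x ≥ 0 := by linarith [hx.1]
    have axy : |T x - T y| ≤ T x + T y := by rw [abs_le]; constructor <;> linarith
    have ayz : |T y - T z| ≤ T y + T z := by rw [abs_le]; constructor <;> linarith
    have axz : |T x - T z| ≤ T x + T z := by rw [abs_le]; constructor <;> linarith
    rw [abs_of_nonneg (by linarith [hx.1] : (0:ℝ) ≤ x - T x),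
        abs_of_nonneg (by linarith [hy.1] : (0:ℝ) ≤ y - T y),
        abs_of_nonneg (by linarith [hz.1] : (0:ℝ) ≤ z - T z)]
    linarith [hx.1, hy.1, hz.1]
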